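/- Let $r,s$ be real numbers with $0 \le r < 1 < s$, let $A > 0$, $B > 0$, $\mu > 0$, and let $C \le 0$. Define $G(t) = A t^{1-r} - B t^{s-r}$, $t_0 = ((1-r)A/((s-r)B))^{1/(s-1)}$, and $F(t) = \frac{t^2}{2}A - \frac{\mu t^{r+1}}{r+1}C - \frac{t^{s+1}}{s+1}B$ for $t \ge 0$. Then there exists a unique $t^- \in (0,\infty)$ such that $G(t^-) = \mu C$; moreover $t^- > t_0$, $F'(t^-) = 0$, $F''(t^-) < 0$, and $F(t^-) = \sup_{t \ge 0} F(t)$. -/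

import Mathlib

set_option maxHeartbeats 800000

/-- Lemma 4(a) (Lemma Char(a)), fibering-map form: if `C ≤ 0` there is a unique
`t⁻ > 0` with `G t⁻ = μ C`; it satisfies `t⁻ > t₀`, `F'(t⁻) = 0`, `F''(t⁻) < 0`,
and `F(t⁻) = sup_{t ≥ 0} F(t)`. -/
theorem stmt_2 (r s A B μ C : ℝ) (hr0 : 0 ≤ r) (hr1 : r < 1) (hs : 1 < s)
    (hA : 0 < A) (hB : 0 < B) (hμ : 0 < μ) (hC : C ≤ 0)
    (G : ℝ → ℝ) (hG : ∀ t : ℝ, G t = A * t ^ (1 - r) - B * t ^ (s - r))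
    (t₀ : ℝ) (ht₀ : t₀ = ((1 - r) * A / ((s - r) * B)) ^ (1 / (s - 1)))
    (F : ℝ → ℝ)
    (hF : ∀ t : ℝ, F t = t ^ (2 : ℝ) / 2 * A - μ * t ^ (r + 1) / (r + 1) * C -
      t ^ (s + 1) / (s + 1) * B) :
    ∃ tm : ℝ, 0 < tm ∧ G tm = μ * C ∧
      (∀ t : ℝ, 0 < t → G t = μ * C → t = tm) ∧
      t₀ < tm ∧ deriv F tm = 0 ∧ deriv (deriv F) tm < 0 ∧
      IsGreatest (F '' Set.Ici 0) (F tm) := by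
  have hs1 : (0:ℝ) < s - 1 := by linarith
  have h1r : (0:ℝ) < 1 - r := by linarith
  have hsr : (0:ℝ) < s - r := by linarith
  have hAB : 0 < A / B := div_pos hA hB
  have hμC : μ * C ≤ 0 := mul_nonpos_of_nonneg_of_nonpos hμ.le hC
  set ts : ℝ := (A / B) ^ (1 / (s - 1)) with hts
  have hts0 : 0 < ts := Real.rpow_pos_of_pos hAB _
  have htsp : ts ^ (s - 1) = A / B := by
    rw [hts, ← Real.rpow_mul hAB.le, one_div, inv_mul_cancel₀ hs1.ne', Real.rpow_one]
  -- factorization of G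
  have hGfac : ∀ t : ℝ, 0 < t → G t = t ^ (1 - r) * (A - B * t ^ (s - 1)) := by
    intro t ht
    rw [hG]
    have e : t ^ (s - r) = t ^ (1 - r) * t ^ (s - 1) := by
      rw [← Real.rpow_add ht]; ring_nf
    rw [e]; ring
  -- G positive on (0, ts)
  have hGpos : ∀ t : ℝ, 0 < t → t < ts → 0 < G t := by
    intro t ht hlt
    rw [hGfac t ht]
    have h1 : t ^ (s - 1) < A / B := by
      rw [← htsp]; exact Real.rpow_lt_rpow ht.le hlt hs1
    have h2 : 0 < A - B * t ^ (s - 1) := by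
      have := (lt_div_iff₀ hB).mp h1
      linarith
    exact mul_pos (Real.rpow_pos_of_pos ht _) h2
  -- ψ ≤ 0 for t ≥ ts
  have hψle : ∀ t : ℝ, ts ≤ t → A - B * t ^ (s - 1) ≤ 0 := by
    intro t htle
    have h1 : A / B ≤ t ^ (s - 1) := by
      rw [← htsp]; exact Real.rpow_le_rpow hts0.le htle hs1.le
    have := (div_le_iff₀ hB).mp h1
    linarith
  -- G strictly decreasing on [ts, ∞)
  have hGanti : StrictAntiOn G (Set.Ici ts) := by
    intro x hx y hy hxy
    have hx0 : 0 < x := lt_of_lt_of_le hts0 hx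
    have hy0 : 0 < y := lt_of_lt_of_le hts0 hy
    rw [hGfac x hx0, hGfac y hy0]
    have hψx : A - B * x ^ (s - 1) ≤ 0 := hψle x hx
    have hpe : x ^ (s - 1) < y ^ (s - 1) := Real.rpow_lt_rpow hx0.le hxy hs1
    have hψxy : A - B * y ^ (s - 1) < A - B * x ^ (s - 1) := by nlinarith
    have hpow : x ^ (1 - r) < y ^ (1 - r) := Real.rpow_lt_rpow hx0.le hxy h1r
    have hpx : 0 < x ^ (1 - r) := Real.rpow_pos_of_pos hx0 _
    have hpy : 0 < y ^ (1 - r) := Real.rpow_pos_of_pos hy0 _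
    nlinarith
  -- existence via IVT on [ts, T]
  have hGts : G ts = 0 := by
    rw [hGfac ts hts0, htsp]
    field_simp
    ring
  obtain ⟨tm, htmIcc, hGtm⟩ : ∃ tm, tm ∈ Set.Icc ts (max ts (max 1 (((A - μ * C) / B) ^ (1 / (s - 1))))) ∧ G tm = μ * C := by
    set T := max ts (max 1 (((A - μ * C) / B) ^ (1 / (s - 1)))) with hT
    have hT1 : (1:ℝ) ≤ T := le_trans (le_max_left _ _) (le_max_right _ _)
    have hTts : ts ≤ T := le_max_left _ _
    have hT0 : 0 < T := lt_of_lt_of_le one_pos hT1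
    have hbase : 0 ≤ (A - μ * C) / B := div_nonneg (by linarith) hB.le
    have hTbig : (A - μ * C) / B ≤ T ^ (s - 1) := by
      have h1 : ((A - μ * C) / B) ^ (1 / (s-1)) ≤ T :=
        le_trans (le_max_right _ _) (le_max_right _ _)
      calc (A - μ * C) / B = (((A - μ * C) / B) ^ (1 / (s-1))) ^ (s - 1) := by
            rw [← Real.rpow_mul hbase, one_div, inv_mul_cancel₀ hs1.ne', Real.rpow_one]
        _ ≤ T ^ (s - 1) := Real.rpow_le_rpow (Real.rpow_nonneg hbase _) h1 hs1.le
    have hψT : A - B * T ^ (s - 1) ≤ μ * C := by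
      have := (div_le_iff₀ hB).mp hTbig
      linarith
    have hGT : G T ≤ μ * C := by
      rw [hGfac T hT0]
      have h1 : (1:ℝ) ≤ T ^ (1 - r) := by
        calc (1:ℝ) = 1 ^ (1 - r) := (Real.one_rpow _).symm
          _ ≤ T ^ (1 - r) := Real.rpow_le_rpow zero_le_one hT1 h1r.le
      nlinarith
    have hcontG : ContinuousOn G (Set.Icc ts T) := by
      have : ContinuousOn (fun t : ℝ => A * t ^ (1 - r) - B * t ^ (s - r)) (Set.Icc ts T) := by
        apply ContinuousOn.sub
        · exact continuousOn_const.mul (fun x hx => (Real.continuousAt_rpow_const x _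
            (Or.inl (ne_of_gt (lt_of_lt_of_le hts0 hx.1)))).continuousWithinAt)
        · exact continuousOn_const.mul (fun x hx => (Real.continuousAt_rpow_const x _
            (Or.inl (ne_of_gt (lt_of_lt_of_le hts0 hx.1)))).continuousWithinAt)
      exact this.congr (fun x _ => hG x)
    have hmem : μ * C ∈ Set.Icc (G T) (G ts) := ⟨hGT, by rw [hGts]; exact hμC⟩
    obtain ⟨tm, htm, hGtm⟩ := intermediate_value_Icc' hTts hcontG hmem
    exact ⟨tm, htm, hGtm⟩
  have htmts : ts ≤ tm := htmIcc.1
  have htm0 : 0 < tm := lt_of_lt_of_le hts0 htmts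
  -- uniqueness
  have huniq : ∀ t : ℝ, 0 < t → G t = μ * C → t = tm := by
    intro t ht hGt
    have htts : ts ≤ t := by
      by_contra h
      push_neg at h
      have := hGpos t ht h
      linarith [hGt ▸ this]
    exact hGanti.injOn htts htmts (by rw [hGt, hGtm])
  -- t₀ < tm
  have ht0tm : t₀ < tm := by
    have hlt : (1 - r) * A / ((s - r) * B) < A / B := by
      rw [div_lt_div_iff₀ (mul_pos hsr hB) hB]
      nlinarith [mul_pos hA hB]
    have h0 : 0 ≤ (1 - r) * A / ((s - r) * B) :=
      div_nonneg (by nlinarith) (by nlinarith)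
    calc t₀ < ts := by
          rw [ht₀, hts]
          exact Real.rpow_lt_rpow h0 hlt (by positivity)
      _ ≤ tm := htmts
  -- first derivative of F
  have hFderiv : ∀ t : ℝ, HasDerivAt F (t * A - μ * t ^ r * C - t ^ s * B) t := by
    intro t
    have h1 : HasDerivAt (fun t : ℝ => t ^ (2:ℝ) / 2 * A) (t * A) t := by
      have h := (Real.hasDerivAt_rpow_const (x := t) (p := 2) (Or.inr one_le_two))
      have h2 := (h.div_const 2).mul_const A
      refine h2.congr_deriv ?_
      symm
      norm_num [Real.rpow_one]
    have h2 : HasDerivAt (fun t : ℝ => μ * t ^ (r + 1) / (r + 1) * C) (μ * t ^ r * C) t := by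
      have h := (Real.hasDerivAt_rpow_const (x := t) (p := r + 1) (Or.inr (by linarith)))
      have h2 := (((h.const_mul μ).div_const (r + 1)).mul_const C)
      refine h2.congr_deriv ?_
      symm
      rw [show r + 1 - 1 = r from by ring]
      have : r + 1 ≠ 0 := by linarith
      field_simp
      try ring
    have h3 : HasDerivAt (fun t : ℝ => t ^ (s + 1) / (s + 1) * B) (t ^ s * B) t := by
      have h := (Real.hasDerivAt_rpow_const (x := t) (p := s + 1) (Or.inr (by linarith)))
      have h2 := ((h.div_const (s + 1)).mul_const B)
      refine h2.congr_deriv ?_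
      symm
      rw [show s + 1 - 1 = s from by ring]
      have : s + 1 ≠ 0 := by linarith
      field_simp
      try ring
    have hFeq : F = fun t : ℝ => t ^ (2:ℝ) / 2 * A - μ * t ^ (r + 1) / (r + 1) * C -
        t ^ (s + 1) / (s + 1) * B := funext hF
    rw [hFeq]
    exact (h1.sub h2).sub h3
  have hderivF : deriv F = fun t : ℝ => t * A - μ * t ^ r * C - t ^ s * B :=
    funext fun t => (hFderiv t).deriv
  have hderivF' : ∀ t : ℝ, deriv F t = t * A - μ * t ^ r * C - t ^ s * B :=
    fun t => (hFderiv t).deriv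
  -- key: F' t = t^r (G t - μ C) for t > 0
  have hkey : ∀ t : ℝ, 0 < t → t * A - μ * t ^ r * C - t ^ s * B = t ^ r * (G t - μ * C) := by
    intro t ht
    rw [hG]
    have e1 : t ^ r * t ^ (1 - r) = t := by
      rw [← Real.rpow_add ht]
      norm_num
    have e2 : t ^ r * t ^ (s - r) = t ^ s := by
      rw [← Real.rpow_add ht, show r + (s - r) = s from by ring]
    linear_combination B * e2 - A * e1
  have hcontF : Continuous F := by
    have : Differentiable ℝ F := fun t => (hFderiv t).differentiableAt
    exact this.continuous
  -- F'(tm) = 0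
  have hF'tm : deriv F tm = 0 := by
    rw [hderivF' tm, hkey tm htm0, hGtm]
    ring
  -- second derivative
  have hF''tm : deriv (deriv F) tm < 0 := by
    have hd : HasDerivAt (deriv F) (A - μ * (r * tm ^ (r - 1)) * C - s * tm ^ (s - 1) * B) tm := by
      rw [hderivF]
      have h1 : HasDerivAt (fun t : ℝ => t * A) A tm := by
        simpa using (hasDerivAt_id tm).mul_const A
      have h2 : HasDerivAt (fun t : ℝ => μ * t ^ r * C) (μ * (r * tm ^ (r - 1)) * C) tm := by
        have h := (Real.hasDerivAt_rpow_const (x := tm) (p := r) (Or.inl htm0.ne'))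
        exact (h.const_mul μ).mul_const C
      have h3 : HasDerivAt (fun t : ℝ => t ^ s * B) (s * tm ^ (s - 1) * B) tm := by
        have h := (Real.hasDerivAt_rpow_const (x := tm) (p := s) (Or.inr hs.le))
        exact h.mul_const B
      exact (h1.sub h2).sub h3
    rw [hd.deriv]
    -- substitute μ C = G tm
    have e1 : tm ^ (r - 1) * tm ^ (1 - r) = 1 := by
      rw [← Real.rpow_add htm0]
      norm_num
    have e2 : tm ^ (r - 1) * tm ^ (s - r) = tm ^ (s - 1) := by
      rw [← Real.rpow_add htm0, show r - 1 + (s - r) = s - 1 from by ring]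
    have hμCval : μ * C = A * tm ^ (1 - r) - B * tm ^ (s - r) := by rw [← hGtm, hG]
    have hval : A - μ * (r * tm ^ (r - 1)) * C - s * tm ^ (s - 1) * B
        = (1 - r) * A - (s - r) * (B * tm ^ (s - 1)) := by
      have : μ * C * tm ^ (r - 1) = A - B * tm ^ (s - 1) := by
        rw [hμCval]
        linear_combination A * e1 - B * e2
      nlinarith [this]
    rw [hval]
    have hge : A / B ≤ tm ^ (s - 1) := by
      rw [← htsp]; exact Real.rpow_le_rpow hts0.le htmts hs1.le
    have : A ≤ B * tm ^ (s - 1) := by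
      have := (div_le_iff₀ hB).mp hge
      linarith
    nlinarith
  -- monotone on [0, tm]
  have hmono : StrictMonoOn F (Set.Icc 0 tm) := by
    apply strictMonoOn_of_deriv_pos (convex_Icc 0 tm) hcontF.continuousOn
    intro t ht
    rw [interior_Icc] at ht
    rw [hderivF' t, hkey t ht.1]
    have hGt : μ * C < G t := by
      rcases lt_or_ge t ts with h | h
      · exact lt_of_le_of_lt hμC (hGpos t ht.1 h)
      · rw [← hGtm]
        exact hGanti h (Set.mem_Ici.mpr htmts) ht.2
    exact mul_pos (Real.rpow_pos_of_pos ht.1 _) (by linarith)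
  -- antitone on [tm, ∞)
  have hanti : StrictAntiOn F (Set.Ici tm) := by
    apply strictAntiOn_of_deriv_neg (convex_Ici tm) hcontF.continuousOn
    intro t ht
    rw [interior_Ici] at ht
    have ht0 : 0 < t := lt_trans htm0 ht
    rw [hderivF' t, hkey t ht0]
    have hGt : G t < μ * C := by
      rw [← hGtm]
      exact hGanti (Set.mem_Ici.mpr htmts) (Set.mem_Ici.mpr (le_trans htmts ht.le)) ht
    exact mul_neg_of_pos_of_neg (Real.rpow_pos_of_pos ht0 _) (by linarith)
  refine ⟨tm, htm0, hGtm, huniq, ht0tm, hF'tm, hF''tm, ?_, ?_⟩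
  · exact ⟨tm, Set.mem_Ici.mpr htm0.le, rfl⟩
  · rintro y ⟨t, ht, rfl⟩
    rcases le_total t tm with h | h
    · exact hmono.monotoneOn ⟨ht, h⟩ ⟨htm0.le, le_refl tm⟩ h
    · exact hanti.antitoneOn (Set.mem_Ici.mpr (le_refl tm)) (Set.mem_Ici.mpr h) h
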